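/- arXiv:2408.14662 — 2 statements merged into one kernel-verified Lean document; each statement's English description precedes it below -/
import Mathlib

section
/- Let ψ be a real-analytic solution of {ψ, Δψ} = 0 on an open connected set Ω ⊆ ℝ², and let Γ be a real-analytic curve consisting of points where ∇ψ = 0, with tangent vector τ and normal n at a point x ∈ Γ. Then ∂_τ∂_n ψ(x) = 0 and ∂_τ∂_τ ψ(x) = 0; consequently, D²ψ(x) = 0 if and only if Δψ(x) = 0. -/
set_option maxHeartbeats 1000000
noncomputable section

/-- Poisson bracket `{f, g} = ∂₁f ∂₂g − ∂₂f ∂₁g` on `ℝ²`. -/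
def bracket (f g : ℝ × ℝ → ℝ) (x : ℝ × ℝ) : ℝ :=
  fderiv ℝ f x (1, 0) * fderiv ℝ g x (0, 1) - fderiv ℝ f x (0, 1) * fderiv ℝ g x (1, 0)

/-- The Laplacian on `ℝ²`. -/
def lap (f : ℝ × ℝ → ℝ) (x : ℝ × ℝ) : ℝ :=
  iteratedFDeriv ℝ 2 f x ![(1, 0), (1, 0)] + iteratedFDeriv ℝ 2 f x ![(0, 1), (0, 1)]

theorem stmt5 (Ω : Set (ℝ × ℝ)) (hΩ : IsOpen Ω) (hconn : IsConnected Ω)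
    (ψ : ℝ × ℝ → ℝ) (hψ : AnalyticOnNhd ℝ ψ Ω)
    (heuler : ∀ x ∈ Ω, bracket ψ (lap ψ) x = 0)
    (γ : ℝ → ℝ × ℝ) (ε : ℝ) (hε : 0 < ε)
    (hγ : AnalyticOnNhd ℝ γ (Set.Ioo (-ε) ε))
    (hγΩ : ∀ t ∈ Set.Ioo (-ε) ε, γ t ∈ Ω)
    (hcrit : ∀ t ∈ Set.Ioo (-ε) ε, fderiv ℝ ψ (γ t) = 0)
    (x : ℝ × ℝ) (hx : γ 0 = x)
    (τ n : ℝ × ℝ) (hτ : τ = deriv γ 0) (hτu : ‖τ‖ = 1)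
    (hn : n = (-τ.2, τ.1)) :
    iteratedFDeriv ℝ 2 ψ x ![τ, n] = 0 ∧
    iteratedFDeriv ℝ 2 ψ x ![τ, τ] = 0 ∧
    (iteratedFDeriv ℝ 2 ψ x = 0 ↔ lap ψ x = 0) := by
  have h0mem : (0:ℝ) ∈ Set.Ioo (-ε) ε := ⟨by linarith, hε⟩
  have hxΩ : x ∈ Ω := hx ▸ hγΩ 0 h0mem
  have hψx : AnalyticAt ℝ ψ x := hψ x hxΩ
  set f'' := fderiv ℝ (fderiv ℝ ψ) x with hf''def
  -- the curve has derivative τ at 0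
  have hγ' : HasDerivAt γ τ 0 := by
    rw [hτ]
    exact ((hγ 0 h0mem).differentiableAt).hasDerivAt
  -- fderiv ψ is differentiable at x
  have hd2 : HasFDerivAt (fderiv ℝ ψ) f'' x :=
    ((hψ.fderiv x hxΩ).differentiableAt).hasFDerivAt
  have hF : HasDerivAt (fun t => fderiv ℝ ψ (γ t)) (f'' τ) 0 := by
    have := (hx ▸ hd2 : HasFDerivAt (fderiv ℝ ψ) f'' (γ 0)).comp_hasDerivAt 0 hγ'
    exact this
  have hF0 : HasDerivAt (fun t => fderiv ℝ ψ (γ t)) 0 0 := by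
    have heq : (fun t => fderiv ℝ ψ (γ t)) =ᶠ[nhds 0] fun _ => (0 : ℝ × ℝ →L[ℝ] ℝ) := by
      filter_upwards [Ioo_mem_nhds (neg_lt_zero.2 hε) hε] with t ht using hcrit t ht
    exact (hasDerivAt_const 0 (0 : ℝ × ℝ →L[ℝ] ℝ)).congr_of_eventuallyEq heq
  have hτ0 : f'' τ = 0 := hF.unique hF0
  have key : ∀ v, f'' τ v = 0 := by intro v; rw [hτ0]; rfl
  have hsym : ∀ v w, f'' v w = f'' w v := by
    intro v w
    exact (hψx.contDiffAt (n := 2)).isSymmSndFDerivAt (by simp [minSmoothness_of_isRCLikeNormedField]) v w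
  -- entries of the second derivative
  set a := τ.1 with ha
  set b := τ.2 with hb
  set A := f'' (1,0) (1,0) with hA
  set B := f'' (1,0) (0,1) with hB
  set C := f'' (0,1) (0,1) with hC
  have hBsym : f'' (0,1) (1,0) = B := hsym (0,1) (1,0)
  have hexp : ∀ v w : ℝ × ℝ, f'' v w = v.1*w.1*A + v.1*w.2*B + v.2*w.1*B + v.2*w.2*C := by
    intro v w
    have h1 : f'' v = v.1 • f'' (1,0) + v.2 • f'' (0,1) := by
      have hv : v = v.1 • ((1:ℝ),(0:ℝ)) + v.2 • ((0:ℝ),(1:ℝ)) := by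
        ext <;> simp
      calc f'' v = f'' (v.1 • ((1:ℝ),(0:ℝ)) + v.2 • ((0:ℝ),(1:ℝ))) := by rw [← hv]
        _ = v.1 • f'' (1,0) + v.2 • f'' (0,1) := by rw [map_add, map_smul, map_smul]
    have hw : w = w.1 • ((1:ℝ),(0:ℝ)) + w.2 • ((0:ℝ),(1:ℝ)) := by ext <;> simp
    rw [h1]
    simp only [ContinuousLinearMap.add_apply, ContinuousLinearMap.smul_apply, smul_eq_mul]
    calc v.1 * f'' (1,0) w + v.2 * f'' (0,1) w
        = v.1 * f'' (1,0) (w.1 • ((1:ℝ),(0:ℝ)) + w.2 • ((0:ℝ),(1:ℝ)))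
          + v.2 * f'' (0,1) (w.1 • ((1:ℝ),(0:ℝ)) + w.2 • ((0:ℝ),(1:ℝ))) := by rw [← hw]
      _ = v.1*w.1*A + v.1*w.2*B + v.2*w.1*B + v.2*w.2*C := by
          simp only [map_add, map_smul, smul_eq_mul, ← hA, ← hB, ← hC, hBsym]
          ring
  have eqτ : τ = (a, b) := rfl
  have hτne : τ ≠ 0 := by
    intro h; rw [h] at hτu; simp at hτu
  have hr : 0 < a^2 + b^2 := by
    rcases lt_or_eq_of_le (by positivity : (0:ℝ) ≤ a^2 + b^2) with h | h
    · exact h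
    · exfalso
      have ha0 : a = 0 := by nlinarith [sq_nonneg a, sq_nonneg b]
      have hb0 : b = 0 := by nlinarith [sq_nonneg a, sq_nonneg b]
      exact hτne (by rw [eqτ, ha0, hb0]; rfl)
  have eq1 : a*A + b*B = 0 := by
    have := key ((1:ℝ),(0:ℝ))
    rw [hsym, hexp] at this
    rw [eqτ] at this; simpa using this
  have eq2 : a*B + b*C = 0 := by
    have := key ((0:ℝ),(1:ℝ))
    rw [hsym, hexp] at this
    rw [eqτ] at this; simpa using this
  have hit : ∀ v w : ℝ × ℝ, iteratedFDeriv ℝ 2 ψ x ![v, w] = f'' v w := by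
    intro v w
    rw [iteratedFDeriv_two_apply]
    simp [hf''def]
  refine ⟨?_, ?_, ?_⟩
  · rw [hit]
    exact key n
  · rw [hit]
    exact key τ
  · have hlap : lap ψ x = A + C := by
      unfold lap
      rw [hit, hit]
    constructor
    · intro h
      have h1 : A = 0 := by rw [hA, ← hit]; rw [h]; rfl
      have h2 : C = 0 := by rw [hC, ← hit]; rw [h]; rfl
      rw [hlap, h1, h2]; ring
    · intro h
      rw [hlap] at h
      have hA0 : A = 0 := by
        have : A * (a^2 + b^2) = 0 := by linear_combination a*eq1 - b*eq2 + b^2*h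
        exact (mul_eq_zero.1 this).resolve_right (ne_of_gt hr)
      have hC0 : C = 0 := by linarith
      have hB0 : B = 0 := by
        have : B * (a^2 + b^2) = 0 := by linear_combination a*eq2 + b*eq1 - a*b*h
        exact (mul_eq_zero.1 this).resolve_right (ne_of_gt hr)
      ext m
      have hm : m = ![m 0, m 1] := by
        funext i; fin_cases i <;> rfl
      rw [hm, hit, hexp, hA0, hB0, hC0]
      simp
end
end

section
/- Let ψ be real-analytic on an open set Ω ⊆ ℝ², and let Γ ⊂ Ω be a real-analytic curve such that every point y ∈ Γ has degree of vanishing d_ψ(y) = d for some fixed d ≥ 3 (all derivatives of ψ of order < d vanish on Γ). Then for every x ∈ Γ, the degree of vanishing of Δψ at x equals d − 2, i.e., all derivatives of Δψ of order < d − 2 vanish at x and some derivative of order d − 2 does not. -/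
set_option maxHeartbeats 1000000

noncomputable section

/-- Degree of vanishing: least `k ≥ 1` with `Dᵏf(x) ≠ 0`. -/
def degVan (f : ℝ × ℝ → ℝ) (x : ℝ × ℝ) : ℕ :=
  sInf {k | 1 ≤ k ∧ iteratedFDeriv ℝ k f x ≠ 0}

namespace Stmt6Aux

open Fin Function Set Filter Topology

abbrev V : Type := ℝ × ℝ

variable {f : V → ℝ} {U : Set V} {x : V}

lemma aux_dslice (hf : AnalyticOnNhd ℝ f U) (w : V) :
    AnalyticOnNhd ℝ (fun y => fderiv ℝ f y w) U :=
  (ContinuousLinearMap.apply ℝ ℝ w).comp_analyticOnNhd hf.fderiv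

lemma auxE1 (hU : IsOpen U) (hf : AnalyticOnNhd ℝ f U) (hx : x ∈ U) {n : ℕ}
    (M : Fin (n + 1) → V) :
    iteratedFDeriv ℝ (n + 1) f x M =
      iteratedFDeriv ℝ n (fun y => fderiv ℝ f y (M (Fin.last n))) x (Fin.init M) := by
  rw [iteratedFDeriv_succ_apply_right]
  rw [← iteratedFDerivWithin_of_isOpen (f := fderiv ℝ f) n hU hx,
      ← iteratedFDerivWithin_of_isOpen (f := fun y => fderiv ℝ f y (M (Fin.last n))) n hU hx]
  exact (iteratedFDerivWithin_clm_apply_const_apply hU.uniqueDiffOn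
    (hf.fderiv.contDiffOn hU.uniqueDiffOn) le_rfl hx).symm

-- second derivative commutation, pointwise on U
lemma aux_dd (hU : IsOpen U) (hf : AnalyticOnNhd ℝ f U) (hx : x ∈ U) (w w' : V) :
    fderiv ℝ (fun z => fderiv ℝ f z w) x w' = fderiv ℝ (fun z => fderiv ℝ f z w') x w := by
  have hdf : DifferentiableAt ℝ (fderiv ℝ f) x := (hf.fderiv x hx).differentiableAt
  have h1 : ∀ u u' : V, fderiv ℝ (fun z => fderiv ℝ f z u) x u' =
      fderiv ℝ (fderiv ℝ f) x u' u := by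
    intro u u'
    rw [fderiv_clm_apply hdf (differentiableAt_const u)]
    simp
  rw [h1, h1]
  have hev : ∀ᶠ y in 𝓝 x, HasFDerivAt f (fderiv ℝ f y) y := by
    filter_upwards [hU.mem_nhds hx] with y hy
    exact ((hf y hy).differentiableAt).hasFDerivAt
  exact second_derivative_symmetric_of_eventually hev hdf.hasFDerivAt w' w

lemma auxE2 (hU : IsOpen U) (hf : AnalyticOnNhd ℝ f U) (hx : x ∈ U) {n : ℕ}
    (N : Fin n → V) (w w' : V) :
    iteratedFDeriv ℝ (n + 2) f x (Fin.snoc (Fin.snoc N w) w') =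
      iteratedFDeriv ℝ (n + 2) f x (Fin.snoc (Fin.snoc N w') w) := by
  have key : ∀ (a b : V),
      iteratedFDeriv ℝ (n + 2) f x (Fin.snoc (Fin.snoc N a) b) =
        iteratedFDeriv ℝ n (fun y => fderiv ℝ (fun z => fderiv ℝ f z b) y a) x N := by
    intro a b
    rw [auxE1 hU hf hx]
    simp only [Fin.snoc_last, Fin.init_snoc]
    rw [auxE1 hU (aux_dslice hf b) hx]
    simp only [Fin.snoc_last, Fin.init_snoc]
  rw [key, key]
  rw [← iteratedFDerivWithin_of_isOpen (f := fun y => fderiv ℝ (fun z => fderiv ℝ f z w') y w) n hU hx,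
      ← iteratedFDerivWithin_of_isOpen (f := fun y => fderiv ℝ (fun z => fderiv ℝ f z w) y w') n hU hx]
  rw [iteratedFDerivWithin_congr (fun y hy => aux_dd hU hf hy w' w) hx]

lemma aux_swap : ∀ (n : ℕ) (f : V → ℝ) (U : Set V), IsOpen U → AnalyticOnNhd ℝ f U →
    ∀ x ∈ U, ∀ (M : Fin n → V) (i j : Fin n), (j : ℕ) = (i : ℕ) + 1 →
    iteratedFDeriv ℝ n f x (update (update M i (M j)) j (M i)) =
      iteratedFDeriv ℝ n f x M := by
  intro n
  induction n with
  | zero => intro _ _ _ _ _ _ _ i; exact i.elim0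
  | succ n IH =>
    intro f U hU hf x hx M i j hij
    rcases lt_or_eq_of_le (Nat.lt_succ_iff.mp j.isLt) with hjn | hjn
    · -- j < n : last slot untouched, peel from the right
      have hi_lt : (i : ℕ) < n := by omega
      set i' : Fin n := ⟨i, hi_lt⟩ with hi'
      set j' : Fin n := ⟨j, hjn⟩ with hj'
      have hic : i = Fin.castSucc i' := by ext; rfl
      have hjc : j = Fin.castSucc j' := by ext; rfl
      have hlast_ne_i : Fin.last n ≠ i := by rw [hic]; exact (Fin.castSucc_lt_last i').ne'
      have hlast_ne_j : Fin.last n ≠ j := by rw [hjc]; exact (Fin.castSucc_lt_last j').ne'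
      rw [auxE1 hU hf hx, auxE1 hU hf hx (M := M)]
      have hlast : (update (update M i (M j)) j (M i)) (Fin.last n) = M (Fin.last n) := by
        rw [update_of_ne hlast_ne_j, update_of_ne hlast_ne_i]
      rw [hlast]
      have hinit : Fin.init (update (update M i (M j)) j (M i)) =
          update (update (Fin.init M) i' ((Fin.init M) j')) j' ((Fin.init M) i') := by
        rw [hic, hjc, Fin.init_update_castSucc, Fin.init_update_castSucc]
        have h1 : Fin.init M i' = M (Fin.castSucc i') := rfl
        have h2 : Fin.init M j' = M (Fin.castSucc j') := rfl
        rw [h1, h2]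
      rw [hinit]
      exact IH _ U hU (aux_dslice hf _) x hx (Fin.init M) i' j' hij
    · -- j = last
      have hn : n = (i : ℕ) + 1 := by omega
      obtain ⟨m, rfl⟩ : ∃ m, n = m + 1 := ⟨i, hn⟩
      have hjl : j = Fin.last (m + 1) := by ext; simpa using hjn
      have hic : i = Fin.castSucc (Fin.last m) := by ext; simp; omega
      subst hjl; subst hic
      set P : Fin m → V := Fin.init (Fin.init M) with hP
      have hM : M = Fin.snoc (Fin.snoc P (M (Fin.castSucc (Fin.last m)))) (M (Fin.last (m + 1))) := by
        have h1 : Fin.init M (Fin.last m) = M (Fin.castSucc (Fin.last m)) := rfl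
        have h2 : Fin.snoc P (M (Fin.castSucc (Fin.last m))) = Fin.init M := by
          rw [← h1, hP, Fin.snoc_init_self]
        rw [h2, Fin.snoc_init_self]
      have hupd : update (update M (Fin.castSucc (Fin.last m)) (M (Fin.last (m + 1))))
            (Fin.last (m + 1)) (M (Fin.castSucc (Fin.last m))) =
          Fin.snoc (Fin.snoc P (M (Fin.last (m + 1)))) (M (Fin.castSucc (Fin.last m))) := by
        funext k
        refine Fin.lastCases ?_ (fun k' => ?_) k
        · rw [update_self, Fin.snoc_last]
        · rw [update_of_ne (Fin.castSucc_lt_last k').ne, Fin.snoc_castSucc]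
          refine Fin.lastCases ?_ (fun k'' => ?_) k'
          · rw [update_self, Fin.snoc_last]
          · have hne : Fin.castSucc (Fin.castSucc k'') ≠ Fin.castSucc (Fin.last m) :=
              fun h => absurd (Fin.castSucc_injective _ h) (Fin.castSucc_lt_last k'').ne
            rw [update_of_ne hne, Fin.snoc_castSucc]
            rfl
      rw [hupd]
      conv_rhs => rw [hM]
      exact auxE2 hU hf hx P (M (Fin.last (m + 1))) (M (Fin.castSucc (Fin.last m)))

lemma aux_slotzero (hU : IsOpen U) (hf : AnalyticOnNhd ℝ f U) (hx : x ∈ U) {n : ℕ} {v : V}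
    (h0 : ∀ m : Fin n → V, iteratedFDeriv ℝ (n + 1) f x (Fin.cons v m) = 0) :
    ∀ (M : Fin (n + 1) → V) (i : Fin (n + 1)), M i = v →
      iteratedFDeriv ℝ (n + 1) f x M = 0 := by
  suffices h : ∀ (k : ℕ) (M : Fin (n + 1) → V) (i : Fin (n + 1)), (i : ℕ) = k → M i = v →
      iteratedFDeriv ℝ (n + 1) f x M = 0 by
    intro M i hi; exact h i M i rfl hi
  intro k
  induction k with
  | zero =>
    intro M i hik hMi
    have : i = 0 := by ext; simpa using hik
    subst this
    rw [← Fin.cons_self_tail M, hMi]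
    exact h0 (Fin.tail M)
  | succ k IHk =>
    intro M i hik hMi
    have hk : k < n + 1 := by have := i.isLt; omega
    set i0 : Fin (n + 1) := ⟨k, hk⟩ with hi0
    have hvi0 : (i0 : ℕ) = k := rfl
    have hne0 : i0 ≠ i := by
      intro h
      have h' : (i0 : ℕ) = (i : ℕ) := congrArg Fin.val h
      omega
    have hswap := aux_swap (n + 1) f U hU hf x hx M i0 i (by omega)
    rw [← hswap]
    refine IHk _ i0 rfl ?_
    rw [update_of_ne hne0, update_self, hMi]

lemma aux_struct {n : ℕ} (A : ContinuousMultilinearMap ℝ (fun _ : Fin n => V) ℝ)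
    {v : V} (hv : v ≠ 0) (h0 : ∀ (M : Fin n → V) (i : Fin n), M i = v → A M = 0) :
    ∀ M : Fin n → V, A M =
      (∏ i, ((-(M i).1 * v.2 + (M i).2 * v.1) / (v.1 ^ 2 + v.2 ^ 2))) *
        A (fun _ => (-v.2, v.1)) := by
  have hq : v.1 ^ 2 + v.2 ^ 2 ≠ 0 := by
    intro h
    apply hv
    have h1 : v.1 = 0 ∧ v.2 = 0 := by constructor <;> nlinarith [sq_nonneg v.1, sq_nonneg v.2]
    exact Prod.ext h1.1 h1.2
  set u : V := (-v.2, v.1) with hu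
  set β : V → ℝ := fun w => (-w.1 * v.2 + w.2 * v.1) / (v.1 ^ 2 + v.2 ^ 2) with hβ
  have hdecomp : ∀ w : V, w = ((w.1 * v.1 + w.2 * v.2) / (v.1 ^ 2 + v.2 ^ 2)) • v + (β w) • u := by
    intro w
    rw [Prod.ext_iff]
    constructor
    · simp only [Prod.fst_add, Prod.smul_fst, smul_eq_mul, hu, hβ]
      field_simp
      ring
    · simp only [Prod.snd_add, Prod.smul_snd, smul_eq_mul, hu, hβ]
      field_simp
      ring
  have key : ∀ s : Finset (Fin n), ∀ M : Fin n → V,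
      A M = (∏ i ∈ s, β (M i)) * A (fun i => if i ∈ s then u else M i) := by
    intro s
    induction s using Finset.induction_on with
    | empty => intro M; simp
    | @insert j s' hj IH =>
      intro M
      have e0 : (fun i => if i ∈ s' then u else M i) =
          update (fun i => if i ∈ insert j s' then u else M i) j (M j) := by
        funext k
        by_cases hk : k = j
        · subst hk; simp [hj]
        · rw [update_of_ne hk]
          simp [Finset.mem_insert, hk]
      have hm0j : (fun i => if i ∈ insert j s' then u else M i) j = u := by simp
      have step : A (fun i => if i ∈ s' then u else M i) =
          β (M j) * A (fun i => if i ∈ insert j s' then u else M i) := by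
        rw [e0]
        conv_lhs => rw [hdecomp (M j)]
        rw [A.map_update_add, A.map_update_smul, A.map_update_smul]
        rw [h0 _ j (update_self _ _ _)]
        have hself : update (fun i => if i ∈ insert j s' then u else M i) j u =
            (fun i => if i ∈ insert j s' then u else M i) := by
          funext k
          by_cases hk : k = j
          · subst hk; rw [update_self]; exact hm0j.symm
          · rw [update_of_ne hk]
        rw [hself]
        simp
      rw [IH M, step, Finset.prod_insert hj]
      ring
  intro M
  have := key Finset.univ M
  simp only [Finset.mem_univ, if_true] at this
  exact this

lemma aux_degvan_spec {f : V → ℝ} {x : V} {d : ℕ} (h : degVan f x = d) (hd : 1 ≤ d) :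
    (∀ k, 1 ≤ k → k < d → iteratedFDeriv ℝ k f x = 0) ∧ iteratedFDeriv ℝ d f x ≠ 0 := by
  have hne : {k | 1 ≤ k ∧ iteratedFDeriv ℝ k f x ≠ 0}.Nonempty := by
    by_contra h'
    rw [Set.not_nonempty_iff_eq_empty] at h'
    rw [degVan, h', Nat.sInf_empty] at h
    omega
  have hmem := Nat.sInf_mem hne
  rw [show sInf {k | 1 ≤ k ∧ iteratedFDeriv ℝ k f x ≠ 0} = degVan f x from rfl, h] at hmem
  constructor
  · intro k h1 h2
    by_contra hk
    have hmem2 : k ∈ {k | 1 ≤ k ∧ iteratedFDeriv ℝ k f x ≠ 0} := ⟨h1, hk⟩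
    have hle := Nat.sInf_le hmem2
    rw [show sInf {k | 1 ≤ k ∧ iteratedFDeriv ℝ k f x ≠ 0} = degVan f x from rfl, h] at hle
    omega
  · exact hmem.2

lemma aux_consEval {n : ℕ} (m : Fin n → V) :
    Continuous (fun p : (ContinuousMultilinearMap ℝ (fun _ : Fin (n + 1) => V) ℝ) × V =>
      p.1 (Fin.cons p.2 m)) := by
  have hcons : ∀ (y z : V), (Fin.cons z m : Fin (n + 1) → V) = update (Fin.cons y m) 0 z := by
    intro y z
    rw [Fin.update_cons_zero]
  have hb : IsBoundedBilinearMap ℝ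
      (fun p : (ContinuousMultilinearMap ℝ (fun _ : Fin (n + 1) => V) ℝ) × V =>
        p.1 (Fin.cons p.2 m)) := by
    refine ⟨fun A A' y => ?_, fun c A y => ?_, fun A y y' => ?_, fun c A y => ?_, ?_⟩
    · simp
    · simp
    · rw [hcons 0 (y + y'), hcons 0 y', hcons 0 y]
      exact A.map_update_add _ 0 y y'
    · rw [hcons 0 (c • y), hcons 0 y]
      exact A.map_update_smul _ 0 c y
    · refine ⟨∏ i, (‖m i‖ + 1), by positivity, fun A y => ?_⟩
      have h1 : ‖A (Fin.cons y m)‖ ≤ ‖A‖ * ∏ i, ‖(Fin.cons y m : Fin (n+1) → V) i‖ :=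
        A.le_opNorm _
      have h2 : (∏ i, ‖(Fin.cons y m : Fin (n+1) → V) i‖) = ‖y‖ * ∏ i, ‖m i‖ := by
        rw [Fin.prod_univ_succ]
        simp
      have h3 : (∏ i, ‖m i‖) ≤ ∏ i, (‖m i‖ + 1) :=
        Finset.prod_le_prod (fun i _ => norm_nonneg _) fun i _ => by linarith
      calc ‖A (Fin.cons y m)‖ ≤ ‖A‖ * (‖y‖ * ∏ i, ‖m i‖) := by rw [← h2]; exact h1
        _ ≤ ‖A‖ * (‖y‖ * ∏ i, (‖m i‖ + 1)) := by
            have := mul_le_mul_of_nonneg_left h3 (norm_nonneg y)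
            exact mul_le_mul_of_nonneg_left this (norm_nonneg A)
        _ = (∏ i, (‖m i‖ + 1)) * ‖A‖ * ‖y‖ := by ring
  exact hb.continuous

-- pointwise identification of the summands of lap with second directional derivatives
lemma aux_lap_eq (hU : IsOpen U) (hf : AnalyticOnNhd ℝ f U) (hx : x ∈ U) (w : V) :
    fderiv ℝ (fun z => fderiv ℝ f z w) x w = iteratedFDeriv ℝ 2 f x ![w, w] := by
  have hdf : DifferentiableAt ℝ (fderiv ℝ f) x := (hf.fderiv x hx).differentiableAt
  have h1 : fderiv ℝ (fun z => fderiv ℝ f z w) x w = fderiv ℝ (fderiv ℝ f) x w w := by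
    rw [fderiv_clm_apply hdf (differentiableAt_const w)]
    simp
  rw [h1]
  rw [iteratedFDeriv_succ_apply_right]
  rw [iteratedFDeriv_one_apply]
  congr 1

lemma aux_transfer (hU : IsOpen U) (hf : AnalyticOnNhd ℝ f U) (hx : x ∈ U) (k : ℕ)
    (m : Fin k → V) :
    iteratedFDeriv ℝ k (lap f) x m =
      iteratedFDeriv ℝ (k + 2) f x (Fin.snoc (Fin.snoc m (1, 0)) (1, 0)) +
      iteratedFDeriv ℝ (k + 2) f x (Fin.snoc (Fin.snoc m (0, 1)) (0, 1)) := by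
  -- identify RHS terms
  have hterm : ∀ w : V, iteratedFDeriv ℝ (k + 2) f x (Fin.snoc (Fin.snoc m w) w) =
      iteratedFDeriv ℝ k (fun y => iteratedFDeriv ℝ 2 f y ![w, w]) x m := by
    intro w
    rw [auxE1 hU hf hx]
    simp only [Fin.snoc_last, Fin.init_snoc]
    rw [auxE1 hU (aux_dslice hf w) hx]
    simp only [Fin.snoc_last, Fin.init_snoc]
    rw [← iteratedFDerivWithin_of_isOpen (f := fun y => fderiv ℝ (fun z => fderiv ℝ f z w) y w) k hU hx,
        ← iteratedFDerivWithin_of_isOpen (f := fun y => iteratedFDeriv ℝ 2 f y ![w, w]) k hU hx]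
    rw [iteratedFDerivWithin_congr (fun y hy => aux_lap_eq hU hf hy w) hx]
  rw [hterm, hterm]
  -- analyticity of the two summands
  have hsummand : ∀ w : V, AnalyticOnNhd ℝ (fun y => iteratedFDeriv ℝ 2 f y ![w, w]) U :=
    fun w => (ContinuousMultilinearMap.apply ℝ (fun _ : Fin 2 => V) ℝ ![w, w]).comp_analyticOnNhd
      (hf.iteratedFDeriv 2)
  have hlap : EqOn (lap f)
      ((fun y => iteratedFDeriv ℝ 2 f y ![(1, 0), (1, 0)]) +
       (fun y => iteratedFDeriv ℝ 2 f y ![(0, 1), (0, 1)])) U := fun y _ => rfl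
  rw [← iteratedFDerivWithin_of_isOpen (f := lap f) k hU hx,
      iteratedFDerivWithin_congr hlap hx]
  rw [iteratedFDerivWithin_add_apply ((hsummand _).contDiffOn hU.uniqueDiffOn x hx)
    ((hsummand _).contDiffOn hU.uniqueDiffOn x hx) hU.uniqueDiffOn hx]
  rw [iteratedFDerivWithin_of_isOpen k hU hx, iteratedFDerivWithin_of_isOpen k hU hx]
  rfl

end Stmt6Aux

open Fin Function Set Filter Topology Stmt6Aux

theorem stmt6 (Ω : Set (ℝ × ℝ)) (hΩ : IsOpen Ω)
    (ψ : ℝ × ℝ → ℝ) (hψ : AnalyticOnNhd ℝ ψ Ω)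
    (γ : ℝ → ℝ × ℝ) (ε : ℝ) (hε : 0 < ε)
    (hγ : AnalyticOnNhd ℝ γ (Set.Ioo (-ε) ε))
    (hγnc : ¬ ∀ t ∈ Set.Ioo (-ε) ε, γ t = γ 0)
    (hγΩ : ∀ t ∈ Set.Ioo (-ε) ε, γ t ∈ Ω)
    (d : ℕ) (hd : 3 ≤ d)
    (hdeg : ∀ t ∈ Set.Ioo (-ε) ε, degVan ψ (γ t) = d) :
    ∀ t ∈ Set.Ioo (-ε) ε,
      (∀ k, 1 ≤ k → k < d - 2 → iteratedFDeriv ℝ k (lap ψ) (γ t) = 0) ∧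
      iteratedFDeriv ℝ (d - 2) (lap ψ) (γ t) ≠ 0 ∧
      degVan (lap ψ) (γ t) = d - 2 := by
  obtain ⟨n, rfl⟩ : ∃ n, d = n + 3 := ⟨d - 3, by omega⟩
  have hIopen : IsOpen (Set.Ioo (-ε) ε) := isOpen_Ioo
  have h0I : (0:ℝ) ∈ Set.Ioo (-ε) ε := ⟨by linarith, hε⟩
  have hspec : ∀ t ∈ Set.Ioo (-ε) ε,
      (∀ k, 1 ≤ k → k < n + 3 → iteratedFDeriv ℝ k ψ (γ t) = 0) ∧
      iteratedFDeriv ℝ (n + 3) ψ (γ t) ≠ 0 :=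
    fun t ht => aux_degvan_spec (hdeg t ht) (by omega)
  have hγdiff : ∀ t ∈ Set.Ioo (-ε) ε, DifferentiableAt ℝ γ t :=
    fun t ht => (hγ t ht).differentiableAt
  -- Step B : contraction with the velocity vanishes
  have key1 : ∀ t ∈ Set.Ioo (-ε) ε, ∀ m : Fin (n + 2) → V,
      iteratedFDeriv ℝ (n + 3) ψ (γ t) (Fin.cons (deriv γ t) m) = 0 := by
    intro t ht m
    have hF : AnalyticOnNhd ℝ (iteratedFDeriv ℝ (n + 2) ψ) Ω := hψ.iteratedFDeriv (n + 2)
    have hcomp : HasDerivAt (fun s => iteratedFDeriv ℝ (n + 2) ψ (γ s))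
        ((fderiv ℝ (iteratedFDeriv ℝ (n + 2) ψ) (γ t)) (deriv γ t)) t :=
      ((hF (γ t) (hγΩ t ht)).differentiableAt.hasFDerivAt).comp_hasDerivAt t
        (hγdiff t ht).hasDerivAt
    have hzero : HasDerivAt (fun s => iteratedFDeriv ℝ (n + 2) ψ (γ s)) 0 t := by
      have hev : (fun s => iteratedFDeriv ℝ (n + 2) ψ (γ s)) =ᶠ[𝓝 t] fun _ => 0 := by
        filter_upwards [hIopen.mem_nhds ht] with s hs
        exact (hspec s hs).1 (n + 2) (by omega) (by omega)
      exact (hasDerivAt_const t 0).congr_of_eventuallyEq hev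
    have huniq := hcomp.unique hzero
    have hrw : iteratedFDeriv ℝ (n + 3) ψ (γ t) (Fin.cons (deriv γ t) m) =
        (fderiv ℝ (iteratedFDeriv ℝ (n + 2) ψ) (γ t)) (deriv γ t) m := by
      have h := iteratedFDeriv_succ_apply_left (𝕜 := ℝ) (f := ψ) (x := γ t) (n := n + 2)
        (Fin.cons (deriv γ t) m)
      simpa using h
    rw [hrw, huniq]
    simp
  -- nonvanishing of deriv γ on a dense set
  have hdγan : AnalyticOnNhd ℝ (deriv γ) (Set.Ioo (-ε) ε) := hγ.deriv
  have hncz : ¬ EqOn (deriv γ) 0 (Set.Ioo (-ε) ε) := by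
    intro hz
    apply hγnc
    intro t ht
    refine (convex_Ioo (-ε) ε).is_const_of_fderivWithin_eq_zero hγ.differentiableOn ?_ ht h0I
    intro s hs
    rw [fderivWithin_of_isOpen hIopen hs]
    rw [← toSpanSingleton_deriv]
    rw [show deriv γ s = 0 from hz hs]
    ext
    · simp
    · simp
  -- Step C/D : at every point there exists a nonzero annihilating vector
  have key2 : ∀ t ∈ Set.Ioo (-ε) ε, ∃ v : V, v ≠ 0 ∧ ∀ m : Fin (n + 2) → V,
      iteratedFDeriv ℝ (n + 3) ψ (γ t) (Fin.cons v m) = 0 := by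
    intro t0 ht0
    have hev_ne : ∀ᶠ s in 𝓝[≠] t0, deriv γ s ≠ 0 := by
      by_contra hcon
      rw [Filter.not_eventually] at hcon
      have hfz : ∃ᶠ s in 𝓝[≠] t0, deriv γ s = 0 := by
        apply hcon.mono
        intro s hs
        exact not_not.mp hs
      exact hncz (hdγan.eqOn_zero_of_preconnected_of_frequently_eq_zero
        (convex_Ioo _ _).isPreconnected ht0 hfz)
    have hev_I : ∀ᶠ s in 𝓝[≠] t0, s ∈ Set.Ioo (-ε) ε :=
      eventually_nhdsWithin_of_eventually_nhds (hIopen.eventually_mem ht0)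
    have hseq : ∀ k : ℕ, ∃ s : ℝ, |s - t0| < 1 / (k + 1) ∧ deriv γ s ≠ 0 ∧
        s ∈ Set.Ioo (-ε) ε := by
      intro k
      have hball : ∀ᶠ s in 𝓝[≠] t0, |s - t0| < 1 / (k + 1) := by
        apply eventually_nhdsWithin_of_eventually_nhds
        have : Metric.ball t0 (1 / (k + 1)) ∈ 𝓝 t0 :=
          Metric.ball_mem_nhds t0 (by positivity)
        filter_upwards [this] with s hs
        rw [Metric.mem_ball, Real.dist_eq] at hs
        exact hs
      obtain ⟨s, ⟨h1, h2⟩, h3⟩ := ((hball.and hev_ne).and hev_I).exists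
      exact ⟨s, h1, h2, h3⟩
    choose s hs1 hs2 hs3 using hseq
    have hst : Filter.Tendsto s atTop (𝓝 t0) := by
      rw [tendsto_iff_dist_tendsto_zero]
      refine squeeze_zero (fun k => dist_nonneg) (fun k => ?_)
        tendsto_one_div_add_atTop_nhds_zero_nat
      rw [Real.dist_eq]
      exact (hs1 k).le
    set w : ℕ → V := fun k => ‖deriv γ (s k)‖⁻¹ • deriv γ (s k) with hw
    have hwmem : ∀ k, w k ∈ Metric.sphere (0 : V) 1 := by
      intro k
      rw [mem_sphere_zero_iff_norm, hw, norm_smul, norm_inv, norm_norm]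
      exact inv_mul_cancel₀ (norm_ne_zero_iff.mpr (hs2 k))
    obtain ⟨v, hvmem, φ, hφ, hconv⟩ := (isCompact_sphere (0 : V) 1).tendsto_subseq hwmem
    have hv0 : v ≠ 0 := by
      rw [mem_sphere_zero_iff_norm] at hvmem
      intro h
      rw [h, norm_zero] at hvmem
      norm_num at hvmem
    refine ⟨v, hv0, fun m => ?_⟩
    -- values along the subsequence vanish
    have hzk : ∀ k, iteratedFDeriv ℝ (n + 3) ψ (γ (s k)) (Fin.cons (w k) m) = 0 := by
      intro k
      have hc : (Fin.cons (w k) m : Fin (n + 3) → V) =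
          update (Fin.cons (deriv γ (s k)) m) 0 (‖deriv γ (s k)‖⁻¹ • deriv γ (s k)) := by
        rw [Fin.update_cons_zero]
      have hc2 : (Fin.cons (deriv γ (s k)) m : Fin (n + 3) → V) =
          update (Fin.cons (deriv γ (s k)) m) 0 (deriv γ (s k)) := by
        rw [Fin.update_cons_zero]
      rw [hc, (iteratedFDeriv ℝ (n + 3) ψ (γ (s k))).map_update_smul]
      rw [← hc2, key1 (s k) (hs3 k) m]
      simp
    -- pass to the limit
    have hT1 : Filter.Tendsto (fun k => γ (s (φ k))) atTop (𝓝 (γ t0)) :=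
      ((hγ t0 ht0).continuousAt.tendsto).comp (hst.comp hφ.tendsto_atTop)
    have hT2 : Filter.Tendsto (fun k => iteratedFDeriv ℝ (n + 3) ψ (γ (s (φ k)))) atTop
        (𝓝 (iteratedFDeriv ℝ (n + 3) ψ (γ t0))) :=
      (((hψ.iteratedFDeriv (n + 3)) (γ t0) (hγΩ t0 ht0)).continuousAt.tendsto).comp hT1
    have hT3 : Filter.Tendsto (fun k => w (φ k)) atTop (𝓝 v) := hconv
    have hT : Filter.Tendsto
        (fun k => iteratedFDeriv ℝ (n + 3) ψ (γ (s (φ k))) (Fin.cons (w (φ k)) m)) atTop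
        (𝓝 (iteratedFDeriv ℝ (n + 3) ψ (γ t0) (Fin.cons v m))) := by
      have := (aux_consEval (n := n + 2) m).tendsto
        ((iteratedFDeriv ℝ (n + 3) ψ (γ t0)), v)
      exact this.comp (hT2.prodMk_nhds hT3)
    have hzero : Filter.Tendsto
        (fun k => iteratedFDeriv ℝ (n + 3) ψ (γ (s (φ k))) (Fin.cons (w (φ k)) m)) atTop
        (𝓝 0) := by
      have : (fun k => iteratedFDeriv ℝ (n + 3) ψ (γ (s (φ k))) (Fin.cons (w (φ k)) m)) =
          fun _ => (0:ℝ) := funext fun k => hzk (φ k)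
      rw [this]
      exact tendsto_const_nhds
    exact tendsto_nhds_unique hT hzero
  -- main conclusion
  intro t ht
  have hxΩ : γ t ∈ Ω := hγΩ t ht
  obtain ⟨v, hv0, hvcon⟩ := key2 t ht
  set A := iteratedFDeriv ℝ (n + 3) ψ (γ t) with hA
  have hAne : A ≠ 0 := (hspec t ht).2
  have h0any : ∀ (M : Fin (n + 3) → V) (i : Fin (n + 3)), M i = v → A M = 0 :=
    aux_slotzero hΩ hψ hxΩ hvcon
  have hform := aux_struct A hv0 h0any
  set q : ℝ := v.1 ^ 2 + v.2 ^ 2 with hq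
  have hqpos : 0 < q := by
    have h : v.1 ≠ 0 ∨ v.2 ≠ 0 := by
      by_contra hcon
      push_neg at hcon
      exact hv0 (Prod.ext hcon.1 hcon.2)
    rcases h with h | h <;> positivity
  set u : V := (-v.2, v.1) with hu
  set β : V → ℝ := fun y => (-y.1 * v.2 + y.2 * v.1) / q with hβ
  have hc : A (fun _ => u) ≠ 0 := by
    intro hc0
    apply hAne
    ext M
    rw [hform M, hc0]
    simp
  -- transfer facts
  have htr : ∀ k (m : Fin k → V), iteratedFDeriv ℝ k (lap ψ) (γ t) m =
      iteratedFDeriv ℝ (k + 2) ψ (γ t) (Fin.snoc (Fin.snoc m (1, 0)) (1, 0)) +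
      iteratedFDeriv ℝ (k + 2) ψ (γ t) (Fin.snoc (Fin.snoc m (0, 1)) (0, 1)) :=
    fun k m => aux_transfer hΩ hψ hxΩ k m
  have hvanish : ∀ k, 1 ≤ k → k < n + 1 → iteratedFDeriv ℝ k (lap ψ) (γ t) = 0 := by
    intro k h1 h2
    ext m
    rw [htr k m]
    rw [(hspec t ht).1 (k + 2) (by omega) (by omega)]
    simp
  -- the product formula for the snoc tuples
  have hβu : (-u.1 * v.2 + u.2 * v.1) / q = 1 := by
    rw [div_eq_one_iff_eq (ne_of_gt hqpos)]
    rw [hu, hq]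
    simp only
    ring
  have hprod : ∀ a : V, A (Fin.snoc (Fin.snoc (fun _ : Fin (n + 1) => u) a) a : Fin (n+3) → V) =
      ((-a.1 * v.2 + a.2 * v.1) / q) ^ 2 * A (fun _ => u) := by
    intro a
    rw [hform]
    rw [Fin.prod_univ_castSucc]
    simp only [Fin.snoc_castSucc, Fin.snoc_last]
    rw [Fin.prod_univ_castSucc]
    simp only [Fin.snoc_castSucc, Fin.snoc_last]
    rw [hβu]
    rw [Finset.prod_const_one]
    ring
  have hne : iteratedFDeriv ℝ (n + 1) (lap ψ) (γ t) ≠ 0 := by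
    intro hz
    have hzm := htr (n + 1) (fun _ => u)
    rw [hz] at hzm
    simp only [ContinuousMultilinearMap.zero_apply] at hzm
    have hzm' : (0:ℝ) = A (Fin.snoc (Fin.snoc (fun _ : Fin (n + 1) => u) ((1:ℝ), (0:ℝ))) ((1:ℝ), (0:ℝ)) : Fin (n+3) → V)
        + A (Fin.snoc (Fin.snoc (fun _ : Fin (n + 1) => u) ((0:ℝ), (1:ℝ))) ((0:ℝ), (1:ℝ)) : Fin (n+3) → V) := hzm
    rw [hprod ((1:ℝ), (0:ℝ)), hprod ((0:ℝ), (1:ℝ))] at hzm'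
    simp only at hzm'
    have hfactor : ((-(1:ℝ) * v.2 + 0 * v.1) / q) ^ 2 + ((-(0:ℝ) * v.2 + 1 * v.1) / q) ^ 2
        = 1 / q := by
      have hq0 : q ≠ 0 := ne_of_gt hqpos
      rw [div_pow, div_pow, ← add_div, div_eq_div_iff (pow_ne_zero 2 hq0) hq0]
      rw [hq]
      ring
    have h5 : (1 / q) * A (fun _ => u) = 0 := by
      rw [← hfactor, add_mul]
      linarith [hzm']
    rcases mul_eq_zero.mp h5 with h | h
    · have hq0 : q ≠ 0 := ne_of_gt hqpos
      rw [div_eq_zero_iff] at h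
      rcases h with h | h
      · norm_num at h
      · exact hq0 h
    · exact hc h
  refine ⟨?_, ?_, ?_⟩
  · intro k h1 h2
    exact hvanish k h1 (by omega)
  · exact hne
  · have hmem : (n + 1) ∈ {k | 1 ≤ k ∧ iteratedFDeriv ℝ k (lap ψ) (γ t) ≠ 0} :=
      ⟨by omega, hne⟩
    apply le_antisymm
    · exact Nat.sInf_le hmem
    · apply le_csInf ⟨n + 1, hmem⟩
      intro b hb
      by_contra hcon
      push_neg at hcon
      exact hb.2 (hvanish b hb.1 (by omega))
end
end
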